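/- arXiv:2202.12798 — 5 statements merged into one kernel-verified Lean document; each statement's English description precedes it below -/
import Mathlib

section
/- Let Φ : 𝒜 → ℬ be a unital 2-positive (not necessarily linear) map between unital C*-algebras. Then Φ(A*) = Φ(A)* for every A ∈ 𝒜, and the Choi-type inequality Φ(A*A) ≥ Φ(A*)Φ(A) holds for every A ∈ 𝒜. -/
open scoped CStarAlgebra
set_option maxHeartbeats 1000000


/-- An element of a C*-algebra is positive if and only if it is of the form `star b * b`. -/
def IsPosElem {A : Type*} [Mul A] [Star A] (a : A) : Prop := ∃ b : A, a = star b * b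

/-- A (not necessarily linear) map `Φ : A → B` is `n`-positive if the entrywise induced map
on `n × n` matrices sends positive matrices to positive matrices. -/
def IsNPosMap {A B : Type*} [NonUnitalNonAssocSemiring A] [Star A]
    [NonUnitalNonAssocSemiring B] [Star B] (n : ℕ) (Φ : A → B) : Prop :=
  ∀ M : Matrix (Fin n) (Fin n) A, IsPosElem M → IsPosElem (M.map Φ)

lemma isPosElem_of_nonneg {B : Type*} [CStarAlgebra B] [PartialOrder B] [StarOrderedRing B]
    {b : B} (hb : 0 ≤ b) :
    IsPosElem b := by
  refine ⟨CFC.sqrt b, ?_⟩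
  rw [(IsSelfAdjoint.of_nonneg (CFC.sqrt_nonneg b)).star_eq, CFC.sqrt_mul_sqrt_self b hb]

/-- A unital 2-positive (not necessarily linear) map between unital C*-algebras is
star-preserving and satisfies the Choi-type inequality `Φ(A*A) ≥ Φ(A*)Φ(A)`. -/
theorem unital_two_positive_star_preserving_and_choi
    {𝒜 ℬ : Type*} [CStarAlgebra 𝒜] [CStarAlgebra ℬ]
    (Φ : 𝒜 → ℬ) (hunital : Φ 1 = 1) (h2 : IsNPosMap 2 Φ) :
    ∀ A : 𝒜, Φ (star A) = star (Φ A) ∧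
      IsPosElem (Φ (star A * A) - Φ (star A) * Φ A) := by
  intro A
  set M : Matrix (Fin 2) (Fin 2) 𝒜 := !![1, A; star A, star A * A] with hM
  have hMpos : IsPosElem M := by
    refine ⟨!![1, A; 0, 0], ?_⟩
    ext i j
    fin_cases i <;> fin_cases j <;>
      simp [hM, Matrix.mul_apply, Fin.sum_univ_two, Matrix.conjTranspose_apply]
  obtain ⟨N, hN⟩ := h2 M hMpos
  have hP : ∀ i j, Φ (M i j) = ∑ k : Fin 2, star (N k i) * N k j := by
    intro i j
    have := congrFun (congrFun hN i) j
    simpa [Matrix.mul_apply, Matrix.conjTranspose_apply, Matrix.map_apply] using this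
  have hP00 : (1 : ℬ) = ∑ k : Fin 2, star (N k 0) * N k 0 := by
    simpa [hM, hunital] using hP 0 0
  have hP01 : Φ A = ∑ k : Fin 2, star (N k 0) * N k 1 := by
    simpa [hM] using hP 0 1
  have hP10 : Φ (star A) = ∑ k : Fin 2, star (N k 1) * N k 0 := by
    simpa [hM] using hP 1 0
  have hP11 : Φ (star A * A) = ∑ k : Fin 2, star (N k 1) * N k 1 := by
    simpa [hM] using hP 1 1
  have hstar : Φ (star A) = star (Φ A) := by
    rw [hP10, hP01, star_sum]
    simp [mul_comm]
  refine ⟨hstar, ?_⟩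
  letI : PartialOrder ℬ := CStarAlgebra.spectralOrder ℬ
  letI : StarOrderedRing ℬ := CStarAlgebra.spectralOrderedRing ℬ
  apply isPosElem_of_nonneg
  have key : Φ (star A * A) - Φ (star A) * Φ A
      = ∑ k : Fin 2, star (N k 1 - N k 0 * Φ A) * (N k 1 - N k 0 * Φ A) := by
    have expand : ∑ k : Fin 2, star (N k 1 - N k 0 * Φ A) * (N k 1 - N k 0 * Φ A)
        = (∑ k : Fin 2, star (N k 1) * N k 1)
          - (∑ k : Fin 2, star (N k 1) * N k 0) * Φ A
          - star (Φ A) * (∑ k : Fin 2, star (N k 0) * N k 1)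
          + star (Φ A) * (∑ k : Fin 2, star (N k 0) * N k 0) * Φ A := by
      simp only [Fin.sum_univ_two, star_sub, star_mul]
      noncomm_ring
    rw [expand, ← hP11, ← hP10, ← hP01, ← hP00]
    noncomm_ring
  rw [key]
  exact Finset.sum_nonneg fun k _ => star_mul_self_nonneg _
end

section
/- Let Φ : 𝒜 → ℬ be a 3-positive (not necessarily linear) map between unital C*-algebras. If P and Q are elements of 𝒜 with P ≥ Q ≥ 0 and Φ(P) = Φ(Q), then Φ(P − Q) = Φ(0). -/
open Matrix Filter Topology

private lemma aux_matrix_pos {𝒜 : Type*} [CStarAlgebra 𝒜] (P Q : 𝒜) (q r : 𝒜)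
    (hq : Q = star q * q) (hr : P - Q = star r * r) :
    (!![P, Q, P - Q; Q, Q, 0; P - Q, 0, P - Q] : Matrix (Fin 3) (Fin 3) 𝒜)
      = star !![q, q, 0; r, 0, r; 0, 0, 0] * !![q, q, 0; r, 0, r; 0, 0, 0] := by
  have hP : P = star q * q + star r * r := by rw [← hq]; rw [← hr]; abel
  have hstar : star (!![q, q, 0; r, 0, r; 0, 0, 0] : Matrix (Fin 3) (Fin 3) 𝒜)
      = !![star q, star r, 0; star q, 0, 0; 0, star r, 0] := by
    rw [Matrix.star_eq_conjTranspose]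
    ext i j
    fin_cases i <;> fin_cases j <;> simp [Matrix.vecHead, Matrix.vecTail]
  rw [hstar, Matrix.mul_fin_three]
  subst hq hP
  congr 1 <;> simp



/-- Lemma 3.3: if `Φ` is a 3-positive (not necessarily linear) map between unital
C*-algebras, `P ≥ Q ≥ 0` and `Φ(P) = Φ(Q)`, then `Φ(P − Q) = Φ(0)`. -/
theorem three_positive_cancellation
    {𝒜 ℬ : Type*} [CStarAlgebra 𝒜] [CStarAlgebra ℬ]
    (Φ : 𝒜 → ℬ) (h3 : IsNPosMap 3 Φ) (P Q : 𝒜)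
    (hQ : IsPosElem Q) (hPQ : IsPosElem (P - Q)) (hPhi : Φ P = Φ Q) :
    Φ (P - Q) = Φ 0 := by
  letI := CStarAlgebra.spectralOrder ℬ
  letI := CStarAlgebra.spectralOrderedRing ℬ
  obtain ⟨q, hq⟩ := hQ
  obtain ⟨r, hr⟩ := hPQ
  set M : Matrix (Fin 3) (Fin 3) 𝒜 :=
    !![P, Q, P - Q; Q, Q, 0; P - Q, 0, P - Q] with hM
  obtain ⟨c, hc⟩ := h3 M ⟨_, aux_matrix_pos P Q q r hq hr⟩
  have quad : ∀ w : Fin 3 → ℬ, 0 ≤ star w ⬝ᵥ ((M.map Φ) *ᵥ w) := by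
    intro w
    rw [hc]
    have h : star w ⬝ᵥ ((star c * c) *ᵥ w) = star (c *ᵥ w) ⬝ᵥ (c *ᵥ w) := by
      rw [Matrix.star_eq_conjTranspose, ← Matrix.mulVec_mulVec, Matrix.dotProduct_mulVec,
        Matrix.star_mulVec]
    rw [h]
    exact Finset.sum_nonneg fun i _ => by simpa using star_mul_self_nonneg ((c *ᵥ w) i)
  set y := Φ (P - Q) with hy
  set z := Φ (0 : 𝒜) with hz
  set s := y - z with hs
  have key : ∀ t : ℝ, 0 ≤ (2 * t) • s + y := by
    intro t
    have h := quad ![(t : ℝ) • 1, -((t : ℝ) • 1), 1]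
    have e : star (![(t : ℝ) • (1 : ℬ), -((t : ℝ) • 1), 1])
        ⬝ᵥ ((M.map Φ) *ᵥ ![(t : ℝ) • 1, -((t : ℝ) • 1), 1]) = (2 * t) • s + y := by
      simp [hM, dotProduct, Matrix.mulVec, Fin.sum_univ_three, Matrix.map_apply,
        smul_mul_assoc, mul_smul_comm]
      rw [hPhi, hs, hy, hz]
      module
    rw [e] at h
    exact h
  have key' : ∀ t : ℝ, 0 ≤ t • s + y := fun t => by
    simpa [mul_div_cancel₀] using key (t / 2)
  have pos : ∀ n : ℕ, 0 ≤ s + ((n : ℝ) + 1)⁻¹ • y := by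
    intro n
    have hn : (0 : ℝ) < (n : ℝ) + 1 := by positivity
    have h := smul_nonneg (inv_pos.mpr hn).le (key' ((n : ℝ) + 1))
    rwa [smul_add, smul_smul, inv_mul_cancel₀ hn.ne', one_smul] at h
  have neg : ∀ n : ℕ, s ≤ ((n : ℝ) + 1)⁻¹ • y := by
    intro n
    have hn : (0 : ℝ) < (n : ℝ) + 1 := by positivity
    have h := smul_nonneg (inv_pos.mpr hn).le (key' (-((n : ℝ) + 1)))
    rw [smul_add, smul_smul, show ((n : ℝ) + 1)⁻¹ * -((n : ℝ) + 1) = -1 by field_simp,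
      neg_one_smul, ← sub_eq_neg_add, sub_nonneg] at h
    exact h
  have tendinv : Tendsto (fun n : ℕ => ((n : ℝ) + 1)⁻¹ • y) atTop (𝓝 0) := by
    have h1 : Tendsto (fun n : ℕ => ((n : ℝ) + 1)⁻¹) atTop (𝓝 0) := by
      simpa [one_div] using tendsto_one_div_add_atTop_nhds_zero_nat (𝕜 := ℝ)
    simpa using h1.smul_const y
  have hs1 : 0 ≤ s := by
    have tend : Tendsto (fun n : ℕ => s + ((n : ℝ) + 1)⁻¹ • y) atTop (𝓝 s) := by
      simpa using tendsto_const_nhds.add tendinv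
    exact ge_of_tendsto tend (Eventually.of_forall pos)
  have hs2 : s ≤ 0 := ge_of_tendsto tendinv (Eventually.of_forall neg)
  have : y = z := sub_eq_zero.mp (le_antisymm hs2 hs1)
  rw [hy, hz] at this
  exact this
end

section
/- Let 𝒜 be a unital C*-algebra containing elements V and S with V*V = S*S = I and VV* + SS* = I (so that P = VV* is a projection with I − P = SS* and P ∼ I − P ∼ I in the sense of Murray–von Neumann equivalence; such V, S exist in any properly infinite von Neumann algebra), and let ℬ be a unital C*-algebra. If Φ : 𝒜 → ℬ is a 3-positive (not necessarily linear) map satisfying Φ(X*X) = Φ(XX*) for all X ∈ 𝒜, then Φ is constant, i.e., Φ(X) = Φ(0) for every X ∈ 𝒜. -/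
/-- Lemma 3.5 (i): let `𝒜` be a unital C*-algebra containing isometries `V, S` with
`V*V = S*S = 1` and `VV* + SS* = 1` (as in a properly infinite von Neumann algebra).
If `Φ : 𝒜 → ℬ` is 3-positive and satisfies `Φ(X*X) = Φ(XX*)` for every `X`,
then `Φ` is constant: `Φ(X) = Φ(0)` for all `X`. -/
theorem three_positive_tracial_on_properly_infinite_is_constant
    {𝒜 ℬ : Type*} [CStarAlgebra 𝒜] [CStarAlgebra ℬ]
    (V S : 𝒜) (hV : star V * V = 1) (hS : star S * S = 1)
    (hVS : V * star V + S * star S = 1)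
    (Φ : 𝒜 → ℬ) (h3 : IsNPosMap 3 Φ)
    (htr : ∀ X : 𝒜, Φ (star X * X) = Φ (X * star X)) :
    ∀ X : 𝒜, Φ X = Φ 0 := by
  classical
  letI : PartialOrder ℬ := CStarAlgebra.spectralOrder ℬ
  letI : StarOrderedRing ℬ := CStarAlgebra.spectralOrderedRing ℬ
  -- Key lemma: if p is a projection with Φ 1 = Φ p, then Φ x = Φ (p * x) for all x.
  have key : ∀ p x : 𝒜, star p = p → p * p = p → Φ 1 = Φ p → Φ x = Φ (p * x) := by
    intro p x hps hpp hΦp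
    set r : Fin 3 → 𝒜 := fun k => if k = 0 then 1 else if k = 1 then p else x with hr
    set C : Matrix (Fin 3) (Fin 3) 𝒜 := fun k j => if k = 0 then r j else 0 with hC
    obtain ⟨D, hD⟩ := h3 (star C * C) ⟨C, rfl⟩
    have hent : ∀ i j : Fin 3, Φ (star (r i) * r j) = ∑ k, star (D k i) * D k j := by
      intro i j
      have h1 : ((star C * C).map Φ) i j = (star D * D) i j := by rw [hD]
      simp only [Matrix.map_apply, Matrix.mul_apply, Matrix.star_apply, Fin.sum_univ_three,
        hC] at h1 ⊢
      erw [Matrix.mul_apply] at h1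
      change Φ (∑ k, star (C k i) * C k j) = _ at h1
      simpa [hC, Fin.sum_univ_three] using h1
    have e00 := hent 0 0
    have e01 := hent 0 1
    have e10 := hent 1 0
    have e11 := hent 1 1
    have e02 := hent 0 2
    have e12 := hent 1 2
    simp only [hr, if_true, if_false, show (1:Fin 3) ≠ 0 by decide, show (2:Fin 3) ≠ 0 by decide,
      show (2:Fin 3) ≠ 1 by decide, reduceIte, star_one, one_mul, hps, mul_one, hpp] at e00 e01 e10 e11 e02 e12
    -- now: e00 : Φ 1 = ∑ k, star (D k 0) * D k 0, e01 : Φ p = ∑ star (D k 0) * D k 1,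
    -- e10 : Φ p = ∑ star (D k 1) * D k 0, e11 : Φ p = ∑ star (D k 1) * D k 1,
    -- e02 : Φ x = ∑ star (D k 0) * D k 2, e12 : Φ (p * x) = ∑ star (D k 1) * D k 2
    have hzero : ∑ k : Fin 3, star (D k 0 - D k 1) * (D k 0 - D k 1) = 0 := by
      have expand : ∀ k : Fin 3, star (D k 0 - D k 1) * (D k 0 - D k 1)
          = star (D k 0) * D k 0 - star (D k 0) * D k 1 - star (D k 1) * D k 0
            + star (D k 1) * D k 1 := by
        intro k
        simp only [star_sub]
        noncomm_ring
      rw [Finset.sum_congr rfl (fun k _ => expand k)]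
      rw [Finset.sum_add_distrib, Finset.sum_sub_distrib, Finset.sum_sub_distrib]
      rw [← e00, ← e01, ← e10, ← e11, hΦp]
      abel
    have hDk : ∀ k : Fin 3, D k 0 = D k 1 := by
      have h := (Finset.sum_eq_zero_iff_of_nonneg
        (fun k _ => star_mul_self_nonneg (D k 0 - D k 1))).mp hzero
      intro k
      have h2 := h k (Finset.mem_univ k)
      have h3' := (CStarRing.star_mul_self_eq_zero_iff _).mp h2
      exact sub_eq_zero.mp h3'
    rw [e02, e12]
    exact Finset.sum_congr rfl (fun k _ => by rw [hDk k])
  intro X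
  have hSV : star S * V = 0 := by
    have h1 : star S * V = star S * V + star S * V := by
      calc star S * V = star S * ((V * star V + S * star S) * V) := by rw [hVS, one_mul]
      _ = star S * V * (star V * V) + star S * S * (star S * V) := by noncomm_ring
      _ = star S * V + star S * V := by rw [hV, hS, mul_one, one_mul]
    have h2 : star S * V + 0 = star S * V + star S * V := by rw [add_zero]; exact h1
    exact (add_left_cancel h2).symm
  have hP : Φ 1 = Φ (V * star V) := by have := htr V; rwa [hV] at this
  have hQ : Φ 1 = Φ (S * star S) := by have := htr S; rwa [hS] at this
  have hPs : star (V * star V) = V * star V := by rw [star_mul, star_star]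
  have hQs : star (S * star S) = S * star S := by rw [star_mul, star_star]
  have hPp : (V * star V) * (V * star V) = V * star V := by
    calc (V * star V) * (V * star V) = V * (star V * V) * star V := by noncomm_ring
    _ = V * star V := by rw [hV, mul_one]
  have hQp : (S * star S) * (S * star S) = S * star S := by
    calc (S * star S) * (S * star S) = S * (star S * S) * star S := by noncomm_ring
    _ = S * star S := by rw [hS, mul_one]
  have step1 : Φ X = Φ ((V * star V) * X) := key _ _ hPs hPp hP
  have step2 : Φ ((V * star V) * X) = Φ ((S * star S) * ((V * star V) * X)) :=
    key _ _ hQs hQp hQ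
  have hzeroA : (S * star S) * ((V * star V) * X) = 0 := by
    calc (S * star S) * ((V * star V) * X) = S * ((star S * V) * (star V * X)) := by noncomm_ring
    _ = 0 := by rw [hSV, zero_mul, mul_zero]
  rw [step1, step2, hzeroA]
end

section
/- Let 𝒜₁, …, 𝒜_k and ℬ be unital C*-algebras and suppose that for some index j the algebra 𝒜_j contains elements V and S with V*V = S*S = I_j and VV* + SS* = I_j (such V, S exist in any properly infinite von Neumann algebra). Then every positive multilinear map Ψ : 𝒜₁ ⊕ ⋯ ⊕ 𝒜_k → ℬ that is tracial on 𝒜_j must be identically zero. -/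
lemma isPosElem_of_nonneg_s6 {A : Type*} [CStarAlgebra A] [PartialOrder A]
    [StarOrderedRing A] {a : A} (ha : 0 ≤ a) : IsPosElem a :=
  ⟨CFC.sqrt a, by
    rw [(IsSelfAdjoint.of_nonneg (CFC.sqrt_nonneg a)).star_eq, CFC.sqrt_mul_sqrt_self a ha]⟩

lemma nonneg_of_isPosElem {A : Type*} [CStarAlgebra A] [PartialOrder A]
    [StarOrderedRing A] {a : A} (ha : IsPosElem a) : 0 ≤ a := by
  obtain ⟨b, rfl⟩ := ha
  exact star_mul_self_nonneg b

lemma exists_decomp {A : Type*} [CStarAlgebra A] [PartialOrder A] [StarOrderedRing A] (a : A) :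
    ∃ p : Fin 4 → A, (∀ m, IsPosElem (p m)) ∧
      ∑ m, (![1, -1, Complex.I, -Complex.I] : Fin 4 → ℂ) m • p m = a := by
  set re : A := (2⁻¹ : ℝ) • (a + star a) with hre
  set im : A := (2⁻¹ : ℝ) • (Complex.I • (star a - a)) with him
  have hre_sa : IsSelfAdjoint re := by
    rw [hre]
    simp [IsSelfAdjoint, star_smul, star_add, add_comm]
  have him_sa : IsSelfAdjoint im := by
    rw [him]
    simp only [IsSelfAdjoint, star_smul, star_sub, star_star, Complex.star_def, Complex.conj_I,
      star_trivial, neg_smul, ← smul_neg, neg_sub]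
  refine ⟨![re⁺, re⁻, im⁺, im⁻], ?_, ?_⟩
  · intro m
    fin_cases m <;>
      exact isPosElem_of_nonneg_s6 (by first | exact CFC.posPart_nonneg _ | exact CFC.negPart_nonneg _)
  · have h1 : re + Complex.I • im = a := by
      have h2 : Complex.I • im = (2⁻¹ : ℝ) • (a - star a) := by
        rw [him, smul_comm Complex.I ((2⁻¹ : ℝ)), smul_smul, Complex.I_mul_I, neg_smul,
          one_smul, neg_sub]
      rw [hre, h2]
      module
    calc ∑ m, (![1, -1, Complex.I, -Complex.I] : Fin 4 → ℂ) m • (![re⁺, re⁻, im⁺, im⁻]) m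
        = (re⁺ - re⁻) + Complex.I • (im⁺ - im⁻) := by
          simp [Fin.sum_univ_four, smul_sub, sub_eq_add_neg, add_assoc]
      _ = re + Complex.I • im := by rw [CFC.posPart_sub_negPart re, CFC.posPart_sub_negPart im]
      _ = a := h1

/-- Remark 3.6: let `𝒜₁, …, 𝒜_k, ℬ` be unital C*-algebras such that some `𝒜ⱼ` contains
isometries `V, S` with `V*V = S*S = 1` and `VV* + SS* = 1` (as in a properly infinite
von Neumann algebra).  Then every positive multilinear map `Ψ : ⊕ᵢ 𝒜ᵢ → ℬ` that is
tracial on the `j`-th slot is identically zero. -/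
theorem positive_multilinear_tracial_on_slot_is_zero
    {k : ℕ} {A : Fin k → Type*} [∀ i, CStarAlgebra (A i)] {B : Type*} [CStarAlgebra B]
    (j : Fin k) (V S : A j) (hV : star V * V = 1) (hS : star S * S = 1)
    (hVS : V * star V + S * star S = 1)
    (Ψ : MultilinearMap ℂ A B)
    (hpos : ∀ x : ∀ i, A i, (∀ i, IsPosElem (x i)) → IsPosElem (Ψ x))
    (htrj : ∀ (x : ∀ i, A i) (a b : A j),
      Ψ (Function.update x j (a * b)) = Ψ (Function.update x j (b * a))) :
    ∀ x : ∀ i, A i, Ψ x = 0 := by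
  have key : ∀ x : ∀ i, A i, (∀ i, IsPosElem (x i)) → Ψ x = 0 := by
    intro x hx
    letI : PartialOrder (A j) := CStarAlgebra.spectralOrder _
    haveI : StarOrderedRing (A j) := CStarAlgebra.spectralOrderedRing _
    letI : PartialOrder B := CStarAlgebra.spectralOrder _
    haveI : StarOrderedRing B := CStarAlgebra.spectralOrderedRing _
    have hpos' : ∀ a : A j, IsPosElem a → 0 ≤ Ψ (Function.update x j a) := by
      intro a ha
      refine nonneg_of_isPosElem (hpos _ fun i => ?_)
      rcases eq_or_ne i j with rfl | h
      · simpa using ha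
      · rw [Function.update_of_ne h]; exact hx i
    have h1 : Ψ (Function.update x j 1) = 0 := by
      have e0 : Ψ (Function.update x j (V * star V)) + Ψ (Function.update x j (S * star S)) =
          Ψ (Function.update x j 1) := by
        rw [← MultilinearMap.map_update_add, hVS]
      rw [htrj x V (star V), hV, htrj x S (star S), hS] at e0
      exact (add_eq_left.mp e0)
    have h2 : ∀ a : A j, 0 ≤ a → Ψ (Function.update x j a) = 0 := by
      intro a ha
      have hge : 0 ≤ Ψ (Function.update x j a) := hpos' a (isPosElem_of_nonneg_s6 ha)
      have hnorm : algebraMap ℝ (A j) ‖a‖ = ((‖a‖ : ℂ)) • (1 : A j) := by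
        rw [Algebra.algebraMap_eq_smul_one]
        exact (algebraMap_smul ℂ ‖a‖ (1 : A j)).symm
      have h3 : 0 ≤ algebraMap ℝ (A j) ‖a‖ - a :=
        sub_nonneg.2 (IsSelfAdjoint.le_algebraMap_norm_self (IsSelfAdjoint.of_nonneg ha))
      have h4 : 0 ≤ Ψ (Function.update x j (algebraMap ℝ (A j) ‖a‖ - a)) :=
        hpos' _ (isPosElem_of_nonneg_s6 h3)
      rw [MultilinearMap.map_update_sub, hnorm, MultilinearMap.map_update_smul, h1, smul_zero, zero_sub,
        le_neg, neg_zero] at h4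
      exact le_antisymm h4 hge
    have := h2 (x j) (nonneg_of_isPosElem (hx j))
    rwa [Function.update_eq_self] at this
  intro x
  have hdec : ∀ i, ∃ p : Fin 4 → A i, (∀ m, IsPosElem (p m)) ∧
      ∑ m, (![1, -1, Complex.I, -Complex.I] : Fin 4 → ℂ) m • p m = x i := by
    intro i
    letI : PartialOrder (A i) := CStarAlgebra.spectralOrder _
    haveI : StarOrderedRing (A i) := CStarAlgebra.spectralOrderedRing _
    exact exists_decomp (x i)
  choose p hp hsum using hdec
  have hx : x = fun i => ∑ m, (![1, -1, Complex.I, -Complex.I] : Fin 4 → ℂ) m • p i m :=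
    funext fun i => (hsum i).symm
  rw [hx, Ψ.map_sum]
  refine Finset.sum_eq_zero fun r _ => ?_
  have hsmul := Ψ.map_smul_univ (fun i => (![1, -1, Complex.I, -Complex.I] : Fin 4 → ℂ) (r i))
    (fun i => p i (r i))
  rw [show (fun i => (![1, -1, Complex.I, -Complex.I] : Fin 4 → ℂ) (r i) • p i (r i)) =
    (fun i => (fun i m => (![1, -1, Complex.I, -Complex.I] : Fin 4 → ℂ) m • p i m) i (r i)) from rfl] at hsmul
  rw [hsmul, key (fun i => p i (r i)) (fun i => hp i (r i)), smul_zero]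
end

section
/- Let Ω be a compact Hausdorff space, let ψ : 𝒜 → C(Ω) be a unital positive linear map from a unital C*-algebra 𝒜, and let φ : C(Ω) → ℬ be a unital 3-positive (not necessarily linear) map into a unital C*-algebra ℬ with φ(0) = 0, and set Φ = φ ∘ ψ. Then for every self-adjoint X ∈ 𝒜 one has φ(Var_ψ(X)) ≤ Var_Φ(X), i.e., φ(ψ(X²) − ψ(X)²) ≤ Φ(X²) − Φ(X)². -/
set_option maxHeartbeats 1000000


/-- In a unital C*-algebra, a finite sum of elements of the form `star z * z` is again
of that form. -/
lemma isPosElem_sum_star_mul_self {B : Type*} [CStarAlgebra B] {ι : Type*} (s : Finset ι)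
    (z : ι → B) : IsPosElem (∑ i ∈ s, star (z i) * z i) := by
  letI := CStarAlgebra.spectralOrder B
  haveI := CStarAlgebra.spectralOrderedRing B
  have h : (0 : B) ≤ ∑ i ∈ s, star (z i) * z i :=
    Finset.sum_nonneg fun i _ => star_mul_self_nonneg (z i)
  obtain ⟨h1, h2⟩ := nonneg_iff_isSelfAdjoint_and_quasispectrumRestricts.mp h
  obtain ⟨t, ht, -, ht2⟩ := CFC.exists_sqrt_of_isSelfAdjoint_of_quasispectrumRestricts h1 h2
  exact ⟨t, by rw [ht.star_eq, ht2]⟩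

/-- Expanding the quadratic form attached to a matrix of the form `star C * C`. -/
lemma sum_quad {B : Type*} [NonUnitalSemiring B] [StarRing B] {n : ℕ}
    (C : Matrix (Fin n) (Fin n) B) (x : Fin n → B) :
    ∑ j, ∑ k, star (x j) * (star C * C) j k * x k
      = ∑ i, star (∑ j, C i j * x j) * (∑ j, C i j * x j) := by
  have hswap : ∀ (F : Fin n → Fin n → Fin n → B),
      ∑ j, ∑ k, ∑ i, F i j k = ∑ i, ∑ j, ∑ k, F i j k := fun F =>
    (Finset.sum_congr rfl fun j _ => Finset.sum_comm).trans Finset.sum_comm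
  calc ∑ j, ∑ k, star (x j) * (star C * C) j k * x k
      = ∑ j, ∑ k, ∑ i, star (x j) * (star (C i j) * (C i k * x k)) := by
        simp only [Matrix.mul_apply, Matrix.star_apply, Finset.mul_sum, Finset.sum_mul,
          mul_assoc]
    _ = ∑ i, ∑ j, ∑ k, star (x j) * (star (C i j) * (C i k * x k)) := hswap _
    _ = ∑ i, star (∑ j, C i j * x j) * (∑ j, C i j * x j) := by
        simp only [star_sum, star_mul, Finset.sum_mul, Finset.mul_sum, mul_assoc]
        exact Finset.sum_congr rfl fun i _ => Finset.sum_comm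

/-- Inequality (4.5): let `ψ : 𝒜 → C(Ω)` be a unital positive linear map and
`φ : C(Ω) → ℬ` a unital 3-positive map with `φ(0) = 0`, and set `Φ = φ ∘ ψ`.
Then for every self-adjoint `X`, `φ(Var_ψ(X)) ≤ Var_Φ(X)`, that is,
`φ(ψ(X²) − ψ(X)²) ≤ Φ(X²) − Φ(X)²`. -/
theorem phi_of_var_le_var_of_comp
    {𝒜 ℬ : Type*} [CStarAlgebra 𝒜] [CStarAlgebra ℬ]
    {Ω : Type*} [TopologicalSpace Ω] [CompactSpace Ω] [T2Space Ω]
    (ψ : 𝒜 →ₗ[ℂ] C(Ω, ℂ)) (hψ1 : ψ 1 = 1)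
    (hψpos : ∀ a : 𝒜, IsPosElem a → IsPosElem (ψ a))
    (φ : C(Ω, ℂ) → ℬ) (hφ1 : φ 1 = 1) (hφ0 : φ 0 = 0) (hφ3 : IsNPosMap 3 φ)
    (X : 𝒜) (hX : star X = X) :
    IsPosElem ((φ (ψ (X * X)) - φ (ψ X) * φ (ψ X)) - φ (ψ (X * X) - ψ X * ψ X)) := by
  classical
  set f : C(Ω, ℂ) := ψ X with hf
  set g : C(Ω, ℂ) := ψ (X * X) with hg
  -- positives evaluate to nonneg reals
  have key : ∀ (b : 𝒜) (ω : Ω), ∃ r : ℝ, 0 ≤ r ∧ ψ (star b * b) ω = (r : ℂ) := by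
    intro b ω
    obtain ⟨u, hu⟩ := hψpos _ ⟨b, rfl⟩
    refine ⟨Complex.normSq (u ω), Complex.normSq_nonneg _, ?_⟩
    rw [hu]
    simp [Complex.normSq_eq_conj_mul_self]
  -- f is real-valued
  have hc' : star (1 + X) * (1 + X) - star (1 - X) * (1 - X) = (4 : ℂ) • X := by
    rw [show ((4 : ℂ) • X) = X + X + X + X by module]
    simp only [star_add, star_sub, star_one, hX]
    noncomm_ring
  have hfr : ∀ ω : Ω, ∃ t : ℝ, f ω = (t : ℂ) := by
    intro ω
    obtain ⟨r1, -, h1⟩ := key (1 + X) ω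
    obtain ⟨r2, -, h2⟩ := key (1 - X) ω
    have heq : (4 : ℂ) * f ω = (r1 : ℂ) - (r2 : ℂ) := by
      have := congrArg (fun u : C(Ω, ℂ) => u ω) (by rw [← map_sub, hc', map_smul] :
        ψ (star (1 + X) * (1 + X)) - ψ (star (1 - X) * (1 - X)) = (4 : ℂ) • f)
      simp only [ContinuousMap.sub_apply, ContinuousMap.smul_apply, smul_eq_mul] at this
      rw [h1, h2] at this
      exact this.symm
    refine ⟨(r1 - r2) / 4, ?_⟩
    push_cast
    linear_combination heq / 4
  -- Cauchy–Schwarz pointwise: g - f*f is nonneg real valued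
  have hCS : ∀ ω : Ω, ∃ r : ℝ, 0 ≤ r ∧ (g - f * f) ω = (r : ℂ) := by
    intro ω
    obtain ⟨t, hft⟩ := hfr ω
    set b : 𝒜 := X - (t : ℂ) • 1 with hbdef
    obtain ⟨r, hr, hval⟩ := key b ω
    have hsb : star b = b := by
      simp [hbdef, star_sub, star_smul, hX, Complex.conj_ofReal]
    have hb : star b * b = X * X - ((2 * (t : ℂ))) • X + (((t : ℂ)) ^ 2) • (1 : 𝒜) := by
      rw [hsb, hbdef]
      simp only [sub_mul, mul_sub, mul_smul_comm, smul_mul_assoc, one_mul, mul_one, smul_smul]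
      module
    have hψb : ψ (star b * b) = g - ((2 * (t : ℂ))) • f + (((t : ℂ)) ^ 2) • (1 : C(Ω, ℂ)) := by
      rw [hb, map_add, map_sub, map_smul, map_smul, hψ1, ← hf, ← hg]
    rw [hψb] at hval
    refine ⟨r, hr, ?_⟩
    simp only [ContinuousMap.add_apply, ContinuousMap.sub_apply, ContinuousMap.smul_apply,
      ContinuousMap.one_apply, ContinuousMap.mul_apply, smul_eq_mul] at hval ⊢
    rw [hft] at hval ⊢
    linear_combination hval
  set h : C(Ω, ℂ) := g - f * f with hh
  -- square root of h
  have hcont : Continuous fun ω : Ω => ((Real.sqrt ((h ω).re) : ℝ) : ℂ) :=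
    Complex.continuous_ofReal.comp (Real.continuous_sqrt.comp
      (Complex.continuous_re.comp h.continuous))
  set s : C(Ω, ℂ) := ⟨fun ω => ((Real.sqrt ((h ω).re) : ℝ) : ℂ), hcont⟩ with hsdef
  have hs_star : star s = s := by
    ext ω
    simp [hsdef, Complex.conj_ofReal]
  have hs_mul : s * s = h := by
    ext ω
    obtain ⟨r, hr, hval⟩ := hCS ω
    have hre : (h ω).re = r := by rw [hh] at hval ⊢; rw [hval]; simp
    simp only [ContinuousMap.mul_apply, hsdef, ContinuousMap.coe_mk]
    rw [hre, ← Complex.ofReal_mul, Real.mul_self_sqrt hr, hh, hval]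
  have hf_star : star f = f := by
    ext ω
    obtain ⟨t, ht⟩ := hfr ω
    simp [ht, Complex.conj_ofReal]
  -- the 3x3 matrices
  set M : Matrix (Fin 3) (Fin 3) C(Ω, ℂ) := !![1, f, 0; f, g, h; 0, h, h] with hM
  set B : Matrix (Fin 3) (Fin 3) C(Ω, ℂ) := !![1, f, 0; 0, s, s; 0, 0, 0] with hB
  have hMB : M = star B * B := by
    ext i j
    fin_cases i <;> fin_cases j <;>
      simp [hM, hB, Matrix.mul_apply, Fin.sum_univ_three, Matrix.star_apply, hf_star, hs_star,
        hs_mul, hh, Matrix.vecHead, Matrix.vecTail, Function.comp]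
  obtain ⟨C, hC⟩ := hφ3 M ⟨B, hMB⟩
  set P : Matrix (Fin 3) (Fin 3) ℬ := M.map φ with hP
  have hPsa : star P = P := by rw [hC, star_mul, star_star]
  set a : ℬ := φ f with ha
  have h3 : P 1 0 = a := by simp [hP, hM, Matrix.map_apply, ha, Matrix.vecHead, Matrix.vecTail]
  have h4 : P 0 1 = a := by simp [hP, hM, Matrix.map_apply, ha, Matrix.vecHead, Matrix.vecTail]
  have ha_star : star a = a :=
    calc star a = star (P 1 0) := by rw [h3]
      _ = (star P) 0 1 := rfl
      _ = P 0 1 := by rw [hPsa]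
      _ = a := h4
  set x : Fin 3 → ℬ := ![-a, 1, -1] with hx
  set z : Fin 3 → ℬ := fun i => ∑ j, C i j * x j with hz
  have hquad : ∑ j, ∑ k, star (x j) * P j k * x k = ∑ i, star (z i) * z i := by
    rw [hC]
    exact sum_quad C x
  have e00 : P 0 0 = 1 := by simp [hP, hM, Matrix.map_apply, hφ1, Matrix.vecHead, Matrix.vecTail]
  have e02 : P 0 2 = 0 := by simp [hP, hM, Matrix.map_apply, hφ0, Matrix.vecHead, Matrix.vecTail]
  have e20 : P 2 0 = 0 := by simp [hP, hM, Matrix.map_apply, hφ0, Matrix.vecHead, Matrix.vecTail]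
  have e11 : P 1 1 = φ g := by simp [hP, hM, Matrix.map_apply, Matrix.vecHead, Matrix.vecTail]
  have e12 : P 1 2 = φ h := by simp [hP, hM, Matrix.map_apply, Matrix.vecHead, Matrix.vecTail]
  have e21 : P 2 1 = φ h := by simp [hP, hM, Matrix.map_apply, Matrix.vecHead, Matrix.vecTail]
  have e22 : P 2 2 = φ h := by simp [hP, hM, Matrix.map_apply, Matrix.vecHead, Matrix.vecTail]
  have x0 : x 0 = -a := rfl
  have x1 : x 1 = 1 := rfl
  have x2 : x 2 = -1 := rfl
  have htarget : ∑ j, ∑ k, star (x j) * P j k * x k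
      = (φ g - a * a) - φ h := by
    rw [Fin.sum_univ_three]
    rw [Fin.sum_univ_three, Fin.sum_univ_three, Fin.sum_univ_three]
    rw [e00, e02, e20, e11, e12, e21, e22, h3, h4, x0, x1, x2]
    simp only [star_neg, star_one, ha_star]
    noncomm_ring
  have hfinal : (φ g - a * a) - φ h = ∑ i, star (z i) * z i := by
    rw [← htarget, hquad]
  show IsPosElem ((φ g - a * a) - φ h)
  rw [hfinal]
  exact isPosElem_sum_star_mul_self Finset.univ z
end
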